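/- Let (Ω, F, P) be a probability space, for each n let ω ↦ μ_n^ω be a random probability measure on ℝ (i.e., ω ↦ ∫ g dμ_n^ω is measurable for every bounded continuous g), and let μ be a fixed probability measure on ℝ. Suppose that for every bounded continuous g : ℝ → ℝ, the random variables ∫ g dμ_n^ω converge in probability to ∫ g dμ. Then for every Borel set D ⊆ ℝ whose topological boundary satisfies μ(∂D) = 0, the random variables μ_n^ω(D) converge in probability to μ(D). -/

import Mathlib

open MeasureTheory Filter Metric Topology ENNReal

/-- The continuous approximation `x ↦ min 1 (m · dist(x, F))` to the indicator of `Fᶜ`,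
as a bounded continuous function. -/
noncomputable def lowerApprox (F : Set ℝ) (m : ℕ) : BoundedContinuousFunction ℝ ℝ :=
  ⟨⟨fun x => min 1 ((m : ℝ) * infDist x F),
    continuous_const.min (continuous_const.mul (continuous_infDist_pt F))⟩, 1, by
      intro x y
      have hx0 : (0:ℝ) ≤ min 1 ((m : ℝ) * infDist x F) :=
        le_min one_pos.le (mul_nonneg (Nat.cast_nonneg m) infDist_nonneg)
      have hy0 : (0:ℝ) ≤ min 1 ((m : ℝ) * infDist y F) :=
        le_min one_pos.le (mul_nonneg (Nat.cast_nonneg m) infDist_nonneg)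
      have hx1 : min 1 ((m : ℝ) * infDist x F) ≤ 1 := min_le_left _ _
      have hy1 : min 1 ((m : ℝ) * infDist y F) ≤ 1 := min_le_left _ _
      rw [Real.dist_eq]
      rw [abs_le]
      constructor <;> simp only [ContinuousMap.coe_mk] <;> linarith⟩

lemma lowerApprox_apply (F : Set ℝ) (m : ℕ) (x : ℝ) :
    lowerApprox F m x = min 1 ((m : ℝ) * infDist x F) := rfl

lemma lowerApprox_nonneg (F : Set ℝ) (m : ℕ) (x : ℝ) : 0 ≤ lowerApprox F m x :=
  le_min one_pos.le (mul_nonneg (Nat.cast_nonneg m) infDist_nonneg)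

lemma lowerApprox_le_one (F : Set ℝ) (m : ℕ) (x : ℝ) : lowerApprox F m x ≤ 1 :=
  min_le_left _ _

lemma lowerApprox_eq_zero_of_mem {F : Set ℝ} {x : ℝ} (hx : x ∈ F) (m : ℕ) :
    lowerApprox F m x = 0 := by
  rw [lowerApprox_apply, infDist_zero_of_mem hx, mul_zero, min_eq_right one_pos.le]

lemma lowerApprox_le_indicator {U : Set ℝ} (m : ℕ) (x : ℝ) :
    lowerApprox Uᶜ m x ≤ Set.indicator U 1 x := by
  by_cases hx : x ∈ U
  · rw [Set.indicator_of_mem hx]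
    exact lowerApprox_le_one _ _ _
  · rw [Set.indicator_of_notMem hx]
    rw [lowerApprox_eq_zero_of_mem (Set.mem_compl hx)]

lemma integral_lowerApprox_le {U : Set ℝ} (hU : MeasurableSet U) (m : ℕ)
    (ν : Measure ℝ) [IsProbabilityMeasure ν] :
    ∫ x, lowerApprox Uᶜ m x ∂ν ≤ (ν U).toReal := by
  have h1 : ∫ x, lowerApprox Uᶜ m x ∂ν ≤ ∫ x, Set.indicator U 1 x ∂ν := by
    apply integral_mono ((lowerApprox Uᶜ m).integrable ν)
      ((integrable_const (1:ℝ)).indicator hU) (lowerApprox_le_indicator m)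
  calc ∫ x, lowerApprox Uᶜ m x ∂ν ≤ ∫ x, Set.indicator U 1 x ∂ν := h1
    _ = (ν U).toReal := integral_indicator_one hU

/-- Pointwise convergence of `lowerApprox Uᶜ m` to the indicator of the open set `U`,
provided `Uᶜ` is nonempty. -/
lemma lowerApprox_tendsto_indicator {U : Set ℝ} (hU : IsOpen U) (hUc : Uᶜ.Nonempty) (x : ℝ) :
    Tendsto (fun m => lowerApprox Uᶜ m x) atTop (𝓝 (Set.indicator U 1 x)) := by
  by_cases hx : x ∈ U
  · rw [Set.indicator_of_mem hx]
    have hd : 0 < infDist x Uᶜ :=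
      (hU.isClosed_compl.notMem_iff_infDist_pos hUc).1 (by simpa using hx)
    apply Tendsto.congr' (f₁ := fun _ => (1:ℝ))
    · filter_upwards [eventually_ge_atTop ⌈1 / infDist x Uᶜ⌉₊] with m hm
      have h1 : 1 / infDist x Uᶜ ≤ (m : ℝ) :=
        le_trans (Nat.le_ceil _) (by exact_mod_cast hm)
      have : (1:ℝ) ≤ (m : ℝ) * infDist x Uᶜ := by
        rw [div_le_iff₀ hd] at h1
        linarith
      rw [lowerApprox_apply, min_eq_left this]
    · exact tendsto_const_nhds
  · rw [Set.indicator_of_notMem hx]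
    have : ∀ m, lowerApprox Uᶜ m x = 0 :=
      fun m => lowerApprox_eq_zero_of_mem (Set.mem_compl hx) m
    simpa [this] using tendsto_const_nhds

lemma tendsto_integral_lowerApprox {U : Set ℝ} (hU : IsOpen U) (hUc : Uᶜ.Nonempty)
    (μ : Measure ℝ) [IsProbabilityMeasure μ] :
    Tendsto (fun m => ∫ x, lowerApprox Uᶜ m x ∂μ) atTop (𝓝 ((μ U).toReal)) := by
  have := tendsto_integral_of_dominated_convergence (μ := μ)
    (F := fun m x => lowerApprox Uᶜ m x) (f := fun x => Set.indicator U 1 x)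
    (bound := fun _ => 1)
    (fun m => ((lowerApprox Uᶜ m).continuous).aestronglyMeasurable)
    (integrable_const 1)
    (fun m => Filter.Eventually.of_forall fun x => by
      show ‖lowerApprox Uᶜ m x‖ ≤ (1:ℝ)
      rw [Real.norm_eq_abs, abs_le]
      exact ⟨by linarith [lowerApprox_nonneg Uᶜ m x], lowerApprox_le_one Uᶜ m x⟩)
    (Filter.Eventually.of_forall fun x => lowerApprox_tendsto_indicator hU hUc x)
  rwa [integral_indicator_one hU.measurableSet] at this

/-- One-sided in-probability portmanteau bound for open sets. -/
lemma lower_aux {Ω : Type*} [MeasurableSpace Ω] (P : Measure Ω) [IsProbabilityMeasure P]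
    (κ : ℕ → Ω → Measure ℝ) (hκprob : ∀ n ω, IsProbabilityMeasure (κ n ω))
    (μ : Measure ℝ) [IsProbabilityMeasure μ]
    (hconv : ∀ g : BoundedContinuousFunction ℝ ℝ,
      TendstoInMeasure P (fun n ω => ∫ x, g x ∂(κ n ω)) atTop (fun _ => ∫ x, g x ∂μ))
    (U : Set ℝ) (hU : IsOpen U) {ε : ℝ} (hε : 0 < ε) :
    Tendsto (fun n => P {ω | (κ n ω U).toReal ≤ (μ U).toReal - ε}) atTop (𝓝 0) := by
  by_cases hUc : Uᶜ.Nonempty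
  · -- choose a good approximation level m
    have hμlim := tendsto_integral_lowerApprox hU hUc μ
    have hev : ∀ᶠ m in atTop, (μ U).toReal - ε / 2 < ∫ x, lowerApprox Uᶜ m x ∂μ := by
      have : (μ U).toReal - ε / 2 < (μ U).toReal := by linarith
      exact hμlim.eventually (eventually_gt_nhds this)
    obtain ⟨m, hm⟩ := hev.exists
    -- event inclusion
    have hsub : ∀ n, {ω | (κ n ω U).toReal ≤ (μ U).toReal - ε} ⊆
        {ω | ε / 2 ≤ dist (∫ x, lowerApprox Uᶜ m x ∂(κ n ω)) (∫ x, lowerApprox Uᶜ m x ∂μ)} := by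
      intro n ω hω
      simp only [Set.mem_setOf_eq] at hω ⊢
      haveI := hκprob n ω
      have h1 : ∫ x, lowerApprox Uᶜ m x ∂(κ n ω) ≤ (κ n ω U).toReal :=
        integral_lowerApprox_le hU.measurableSet m (κ n ω)
      rw [Real.dist_eq, le_abs]
      right
      linarith
    have h0 : Tendsto (fun n => P {ω | ε / 2 ≤
        dist (∫ x, lowerApprox Uᶜ m x ∂(κ n ω)) (∫ x, lowerApprox Uᶜ m x ∂μ)})
        atTop (𝓝 0) := tendstoInMeasure_iff_dist.mp (hconv (lowerApprox Uᶜ m)) (ε / 2) (by linarith)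
    refine tendsto_of_tendsto_of_tendsto_of_le_of_le tendsto_const_nhds h0
      (fun n => zero_le) (fun n => measure_mono (hsub n))
  · -- U = univ
    have hU' : U = Set.univ := by
      rw [Set.not_nonempty_iff_eq_empty] at hUc
      simpa using congrArg compl hUc
    subst hU'
    have : ∀ n, P {ω | (κ n ω Set.univ).toReal ≤ (μ Set.univ).toReal - ε} = 0 := by
      intro n
      convert measure_empty (μ := P)
      rw [Set.eq_empty_iff_forall_notMem]
      intro ω hω
      haveI := hκprob n ω
      simp only [Set.mem_setOf_eq, measure_univ, ENNReal.toReal_one] at hω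
      linarith
    simp only [this]
    exact tendsto_const_nhds

lemma measure_interior_eq_of_null_frontier {μ : Measure ℝ} {D : Set ℝ}
    (hfrontier : μ (frontier D) = 0) : μ (interior D) = μ D := by
  apply le_antisymm (measure_mono interior_subset)
  calc μ D ≤ μ (closure D) := measure_mono subset_closure
    _ ≤ μ (interior D ∪ frontier D) := by
        rw [← closure_eq_interior_union_frontier]
    _ ≤ μ (interior D) + μ (frontier D) := measure_union_le _ _
    _ = μ (interior D) := by rw [hfrontier, add_zero]

/-- in-probability portmanteau for random measures: if the random probability
measures `μ_n^ω` on `ℝ` satisfy `∫ g dμ_n^ω → ∫ g dμ` in probability for every bounded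
continuous `g`, then `μ_n^ω(D) → μ(D)` in probability for every Borel set `D` with
`μ(∂D) = 0`. -/
theorem tendstoInMeasure_measure_of_tendstoInMeasure_integrals
    {Ω : Type*} [MeasurableSpace Ω] (P : Measure Ω) [IsProbabilityMeasure P]
    (κ : ℕ → Ω → Measure ℝ)
    (hκprob : ∀ n ω, IsProbabilityMeasure (κ n ω))
    (hκmeas : ∀ (n : ℕ) (g : BoundedContinuousFunction ℝ ℝ),
      Measurable (fun ω => ∫ x, g x ∂(κ n ω)))
    (μ : Measure ℝ) [IsProbabilityMeasure μ]
    (hconv : ∀ g : BoundedContinuousFunction ℝ ℝ,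
      TendstoInMeasure P (fun n ω => ∫ x, g x ∂(κ n ω)) atTop (fun _ => ∫ x, g x ∂μ))
    (D : Set ℝ) (hD : MeasurableSet D) (hfrontier : μ (frontier D) = 0) :
    TendstoInMeasure P (fun n ω => (κ n ω D).toReal) atTop (fun _ => (μ D).toReal) := by
  rw [tendstoInMeasure_iff_dist]
  intro ε hε
  -- measures of interior, set, complement
  have hUeq : (μ (interior D)).toReal = (μ D).toReal := by
    rw [measure_interior_eq_of_null_frontier hfrontier]
  have hfrontier' : μ (frontier Dᶜ) = 0 := by rwa [frontier_compl]
  have hVeq : (μ (interior Dᶜ)).toReal = (μ Dᶜ).toReal := by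
    rw [measure_interior_eq_of_null_frontier hfrontier']
  have compl_toReal : ∀ (ν : Measure ℝ) [IsProbabilityMeasure ν],
      (ν Dᶜ).toReal = 1 - (ν D).toReal := by
    intro ν _
    have h := measure_add_measure_compl (μ := ν) hD
    rw [measure_univ] at h
    have h2 : (ν D).toReal + (ν Dᶜ).toReal = 1 := by
      rw [← ENNReal.toReal_add (measure_ne_top _ _) (measure_ne_top _ _), h, ENNReal.toReal_one]
    linarith
  -- the two one-sided events
  have hA := lower_aux P κ hκprob μ hconv (interior D) isOpen_interior hε
  have hB := lower_aux P κ hκprob μ hconv (interior Dᶜ) isOpen_interior hε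
  have hsub : ∀ n, {ω | ε ≤ dist ((κ n ω D).toReal) ((μ D).toReal)} ⊆
      {ω | (κ n ω (interior D)).toReal ≤ (μ (interior D)).toReal - ε} ∪
      {ω | (κ n ω (interior Dᶜ)).toReal ≤ (μ (interior Dᶜ)).toReal - ε} := by
    intro n ω hω
    haveI := hκprob n ω
    simp only [Set.mem_setOf_eq, Real.dist_eq] at hω
    have hκU : (κ n ω (interior D)).toReal ≤ (κ n ω D).toReal :=
      ENNReal.toReal_mono (measure_ne_top _ _) (measure_mono interior_subset)
    have hκV : (κ n ω (interior Dᶜ)).toReal ≤ (κ n ω Dᶜ).toReal :=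
      ENNReal.toReal_mono (measure_ne_top _ _) (measure_mono interior_subset)
    have hκc := compl_toReal (κ n ω)
    have hμc := compl_toReal μ
    rcases le_abs.mp hω with h | h
    · right
      simp only [Set.mem_setOf_eq]
      linarith
    · left
      simp only [Set.mem_setOf_eq]
      linarith
  have hsum : Tendsto (fun n =>
      P {ω | (κ n ω (interior D)).toReal ≤ (μ (interior D)).toReal - ε} +
      P {ω | (κ n ω (interior Dᶜ)).toReal ≤ (μ (interior Dᶜ)).toReal - ε}) atTop (𝓝 0) := by
    simpa using Tendsto.add hA hB
  refine tendsto_of_tendsto_of_tendsto_of_le_of_le tendsto_const_nhds hsum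
    (fun n => zero_le) (fun n => le_trans (measure_mono (hsub n)) (measure_union_le _ _))
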